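/- For an abelian group A of order 2^{n-1}, the number of cyclic subgroups of the generalized dicyclic group Dic_{2^n}(A) equals |L1(A)| + 2^{n-2}. -/

import Mathlib

lemma my_isCyclic_zpowers {G : Type*} [Group G] (g : G) :
    IsCyclic (Subgroup.zpowers g) := by
  refine ⟨⟨⟨g, Subgroup.mem_zpowers g⟩, fun x => ?_⟩⟩
  obtain ⟨k, hk⟩ := x.2
  refine Subgroup.mem_zpowers_iff.2 ⟨k, ?_⟩
  ext
  simpa using hk

lemma my_zpowers_eq {G : Type*} [Group G] (H : Subgroup G) (hH : IsCyclic H) :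
    ∃ x : G, x ∈ H ∧ Subgroup.zpowers x = H := by
  obtain ⟨g, hg⟩ := hH.exists_generator
  refine ⟨(g : G), g.2, le_antisymm (Subgroup.zpowers_le.2 g.2) ?_⟩
  intro y hy
  obtain ⟨k, hk⟩ := Subgroup.mem_zpowers_iff.1 (hg ⟨y, hy⟩)
  exact Subgroup.mem_zpowers_iff.2 ⟨k, by simpa using congrArg Subtype.val hk⟩

theorem stmt_15 (n : ℕ) (hn : 2 ≤ n) (G : Type*) [Group G] [Finite G]
    (A : Subgroup G) (hA : IsMulCommutative A) (hAcard : Nat.card A = 2 ^ (n - 1))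
    (hGcard : Nat.card G = 2 ^ n) (γ : G) (hγA : γ ∉ A)
    (hγ4 : γ ^ 4 = 1) (hγ2 : γ ^ 2 ∈ A) (hγ2ne : γ ^ 2 ≠ 1)
    (hconj : ∀ g ∈ A, γ * g * γ⁻¹ = g⁻¹) :
    Nat.card {H : Subgroup G // IsCyclic H} =
      Nat.card {H : Subgroup A // IsCyclic H} + 2 ^ (n - 2) := by
  classical
  haveI : Fintype G := Fintype.ofFinite G
  haveI : Finite (Subgroup G) := Finite.of_injective _ SetLike.coe_injective
  haveI : Fintype (Subgroup G) := Fintype.ofFinite _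
  -- A has index 2
  have hindex : A.index = 2 := by
    have h := Subgroup.index_mul_card A
    rw [hAcard, hGcard] at h
    have hn1 : 2 ^ n = 2 * 2 ^ (n - 1) := by
      rw [← pow_succ']
      congr 1
      omega
    have : A.index * 2 ^ (n - 1) = 2 * 2 ^ (n - 1) := by rw [h, hn1]
    exact Nat.eq_of_mul_eq_mul_right (Nat.pow_pos two_pos) this
  -- every x ∉ A is of the form γ * a with a ∈ A
  have hcoset : ∀ x : G, x ∉ A → γ⁻¹ * x ∈ A := by
    intro x hx
    have hcard2 : Nat.card (G ⧸ A) = 2 := hindex ▸ rfl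
    obtain ⟨b, _, hb⟩ := (Nat.card_eq_two_iff' ((1 : G) : G ⧸ A)).1 hcard2
    have hxq : (x : G ⧸ A) ≠ ((1 : G) : G ⧸ A) := by
      intro h
      exact hx (by simpa using (QuotientGroup.eq.1 h))
    have hgq : (γ : G ⧸ A) ≠ ((1 : G) : G ⧸ A) := by
      intro h
      exact hγA (by simpa using (QuotientGroup.eq.1 h))
    have : (x : G ⧸ A) = (γ : G ⧸ A) := (hb _ hxq).trans (hb _ hgq).symm
    have := QuotientGroup.eq.1 this.symm
    simpa using this
  -- key: x² = γ² for all x ∉ A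
  have hsq : ∀ x : G, x ∉ A → x ^ 2 = γ ^ 2 := by
    intro x hx
    obtain ⟨a, ha, rfl⟩ : ∃ a, a ∈ A ∧ x = γ * a := ⟨γ⁻¹ * x, hcoset x hx, by group⟩
    have h1 : γ * a * γ⁻¹ = a⁻¹ := hconj a ha
    have h2 : (γ * a) ^ 2 = (γ * a * γ⁻¹) * (γ ^ 2) * a := by
      rw [pow_two]
      group
    rw [h2, h1]
    have hcm := Subgroup.mul_comm_of_mem_isMulCommutative A hγ2 ha
    rw [mul_assoc, hcm]
    group
  -- powers of x ∉ A
  have hx4 : ∀ x : G, x ∉ A → x ^ 4 = 1 := by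
    intro x hx
    have h : x ^ 4 = (x ^ 2) ^ 2 := by group
    rw [h, hsq x hx, ← pow_mul]
    exact hγ4
  have hx3 : ∀ x : G, x ∉ A → x ^ 3 = x * γ ^ 2 := by
    intro x hx
    rw [pow_succ' x 2, hsq x hx]
  have hmem : ∀ x : G, x ∉ A → ∀ y ∈ Subgroup.zpowers x,
      y = 1 ∨ y = x ∨ y = γ ^ 2 ∨ y = x * γ ^ 2 := by
    intro x hx y hy
    have hy' : y ∈ (Submonoid.powers x : Set G) := by
      rw [powers_eq_zpowers]
      exact hy
    obtain ⟨k, hk⟩ := hy'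
    simp only at hk
    rw [pow_eq_pow_mod k (hx4 x hx)] at hk
    have hcases : k % 4 = 0 ∨ k % 4 = 1 ∨ k % 4 = 2 ∨ k % 4 = 3 := by omega
    rcases hcases with h | h | h | h <;> rw [h] at hk
    · left; simpa using hk.symm
    · right; left; simpa using hk.symm
    · right; right; left; rw [← hk, hsq x hx]
    · right; right; right; rw [← hk, hx3 x hx]
  have hnotA : ∀ x : G, x ∉ A → x * γ ^ 2 ∉ A := by
    intro x hx hmem'
    exact hx (by simpa using A.mul_mem hmem' (A.inv_mem hγ2))
  -- zpowers (x * γ²) = zpowers x for x ∉ A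
  have hzp : ∀ x : G, x ∉ A → Subgroup.zpowers (x * γ ^ 2) = Subgroup.zpowers x := by
    intro x hx
    apply le_antisymm
    · rw [Subgroup.zpowers_le, ← hx3 x hx]
      exact Subgroup.pow_mem _ (Subgroup.mem_zpowers x) 3
    · rw [Subgroup.zpowers_le]
      have h3 : (x * γ ^ 2) ^ 3 = x := by
        rw [hx3 _ (hnotA x hx)]
        calc x * γ ^ 2 * γ ^ 2 = x * γ ^ 4 := by group
        _ = x := by rw [hγ4, mul_one]
      have hmm := Subgroup.pow_mem (Subgroup.zpowers (x * γ ^ 2))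
        (Subgroup.mem_zpowers (x * γ ^ 2)) 3
      rwa [h3] at hmm
  -- split cyclic subgroups into those ≤ A and those not
  have hsplit : Nat.card {H : Subgroup G // IsCyclic H} =
      Nat.card {H : Subgroup G // IsCyclic H ∧ H ≤ A} +
      Nat.card {H : Subgroup G // IsCyclic H ∧ ¬H ≤ A} := by
    have e1 : {H : Subgroup G // IsCyclic H ∧ H ≤ A} ⊕ {H : Subgroup G // IsCyclic H ∧ ¬H ≤ A}
        ≃ {H : Subgroup G // IsCyclic H} :=
      (Equiv.sumCongr (Equiv.subtypeSubtypeEquivSubtypeInter _ _).symm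
        (Equiv.subtypeSubtypeEquivSubtypeInter _ _).symm).trans
        (Equiv.sumCompl (fun H : {H : Subgroup G // IsCyclic H} => H.1 ≤ A))
    rw [← Nat.card_congr e1, Nat.card_sum]
  -- the subgroups contained in A correspond to cyclic subgroups of A
  have hpart1 : Nat.card {H : Subgroup G // IsCyclic H ∧ H ≤ A} =
      Nat.card {H : Subgroup A // IsCyclic H} := by
    refine Nat.card_congr ?_
    refine
      { toFun := fun H => ⟨H.1.subgroupOf A, ?_⟩
        invFun := fun K => ⟨K.1.map A.subtype, ?_, Subgroup.map_subtype_le _⟩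
        left_inv := ?_
        right_inv := ?_ }
    · haveI := H.2.1
      exact isCyclic_of_surjective _ (Subgroup.subgroupOfEquivOfLe H.2.2).symm.surjective
    · haveI := K.2
      exact isCyclic_of_surjective _
        (Subgroup.equivMapOfInjective K.1 A.subtype A.subtype_injective).surjective
    · intro H
      apply Subtype.ext
      show (H.1.subgroupOf A).map A.subtype = H.1
      rw [Subgroup.subgroupOf_map_subtype]
      exact inf_eq_left.2 H.2.2
    · intro K
      exact Subtype.ext (Subgroup.comap_map_eq_self_of_injective A.subtype_injective K.1)
  -- count the cyclic subgroups not contained in A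
  have hpart2 : Nat.card {H : Subgroup G // IsCyclic H ∧ ¬H ≤ A} = 2 ^ (n - 2) := by
    set T := {H : Subgroup G // IsCyclic H ∧ ¬H ≤ A} with hT
    let f : {x : G // x ∉ A} → T := fun x =>
      ⟨Subgroup.zpowers x.1, my_isCyclic_zpowers _,
        fun hle => x.2 (hle (Subgroup.mem_zpowers _))⟩
    have hsurj : Function.Surjective f := by
      rintro ⟨H, hc, hle⟩
      obtain ⟨x, hxH, hxz⟩ := my_zpowers_eq H hc
      have hxA : x ∉ A := fun hxa => hle (hxz ▸ Subgroup.zpowers_le.2 hxa)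
      exact ⟨⟨x, hxA⟩, Subtype.ext hxz⟩
    have hfiber : ∀ t : T, Nat.card {x // f x = t} = 2 := by
      intro t
      obtain ⟨x, hft⟩ := hsurj t
      rw [Nat.card_eq_two_iff]
      have hxne : x.1 ≠ x.1 * γ ^ 2 := by
        intro h
        exact hγ2ne (by simpa using (left_eq_mul.1 h).symm ▸ rfl)
      have hmem2 : f ⟨x.1 * γ ^ 2, hnotA x.1 x.2⟩ = t := by
        rw [← hft]
        exact Subtype.ext (hzp x.1 x.2)
      refine ⟨⟨x, hft⟩, ⟨⟨x.1 * γ ^ 2, hnotA x.1 x.2⟩, hmem2⟩, ?_, ?_⟩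
      · intro h
        exact hxne (congrArg (fun y => y.1.1) h)
      · ext y
        simp only [Set.mem_insert_iff, Set.mem_singleton_iff, Set.mem_univ, iff_true]
        have hy1 : y.1.1 ∈ Subgroup.zpowers x.1 := by
          have h1 : Subgroup.zpowers y.1.1 = t.1 := congrArg Subtype.val y.2
          have h2 : Subgroup.zpowers x.1 = t.1 := congrArg Subtype.val hft
          rw [← h2] at h1
          exact h1 ▸ Subgroup.mem_zpowers _
        rcases hmem x.1 x.2 y.1.1 hy1 with h | h | h | h
        · exact absurd (h ▸ A.one_mem) y.1.2
        · exact Or.inl (Subtype.ext (Subtype.ext h))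
        · exact absurd (h ▸ hγ2) y.1.2
        · exact Or.inr (Subtype.ext (Subtype.ext h))
    -- card of the complement of A in G
    have hS : Nat.card {x : G // x ∉ A} = 2 ^ (n - 1) := by
      have e : {x : G // x ∈ A} ⊕ {x : G // x ∉ A} ≃ G :=
        Equiv.sumCompl fun x => x ∈ A
      have h1 : Nat.card {x : G // x ∈ A} + Nat.card {x : G // x ∉ A} = Nat.card G := by
        rw [← Nat.card_sum, Nat.card_congr e]
      have h2 : Nat.card {x : G // x ∈ A} = 2 ^ (n - 1) := hAcard
      have hn1 : 2 ^ n = 2 * 2 ^ (n - 1) := by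
        rw [← pow_succ']
        congr 1
        omega
      rw [h2, hGcard, hn1] at h1
      omega
    -- sum over fibers
    haveI : Fintype T := Fintype.ofFinite T
    have hsum : Nat.card {x : G // x ∉ A} = ∑ t : T, Nat.card {x // f x = t} := by
      rw [Nat.card_congr (Equiv.sigmaFiberEquiv f).symm, Nat.card_eq_fintype_card,
        Fintype.card_sigma]
      exact Finset.sum_congr rfl fun t _ => (Nat.card_eq_fintype_card).symm
    have hsum2 : Nat.card {x : G // x ∉ A} = 2 * Nat.card T := by
      rw [hsum]
      simp only [hfiber]
      rw [Finset.sum_const, Finset.card_univ, smul_eq_mul, ← Nat.card_eq_fintype_card]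
      ring
    have hn2 : 2 ^ (n - 1) = 2 * 2 ^ (n - 2) := by
      rw [← pow_succ']
      congr 1
      omega
    rw [hS, hn2] at hsum2
    omega
  rw [hsplit, hpart1, hpart2]
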